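/- Let C be an ∞-category with finite colimits, r ≥ 1, and F : [1]^r → C a cubical diagram. For any p ∈ ℕ, the following are equivalent: (1) F is left Kan extended from the subposet of vertices v with ℓ¹-norm |v| ≤ p; (2) every face of F of dimension ≥ p+1 containing the initial vertex is cocartesian; (3) every face of F of dimension exactly p+1 is cocartesian. -/

import Mathlib

open CategoryTheory Limits

universe v u

/-- A two-element poset `{0,1}` (a copy of `Bool`, kept irreducible so that cubes
`α → Two` carry the poset-category structure). -/
def Two : Type := Bool

instance : BooleanAlgebra Two := inferInstanceAs (BooleanAlgebra Bool)
instance : DecidableEq Two := inferInstanceAs (DecidableEq Bool)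

attribute [local instance 2000] Preorder.smallCategory

variable {C : Type u} [Category.{v} C]

/-- The canonical cocone on the punctured cube, with apex the terminal vertex. -/
def cubeCocone {α : Type} (G : (α → Two) ⥤ C) :
    Cocone (ObjectProperty.ι (fun v : α → Two => v ≠ ⊤) ⋙ G) where
  pt := G.obj ⊤
  ι :=
    { app := fun v => G.map (homOfLE le_top)
      naturality := by
        intro u v f
        dsimp
        rw [Category.comp_id, ← G.map_comp]
        exact congrArg G.map (Subsingleton.elim _ _) }

/-- A cube `G : (α → Two) ⥤ C` is cocartesian if its terminal vertex is the colimit of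
the punctured cube. -/
def IsCocartesianCube {α : Type} (G : (α → Two) ⥤ C) : Prop :=
  Nonempty (IsColimit (cubeCocone G))

/-- Insertion of a partial vertex: extend `x` defined on `T` by `u` outside `T`. -/
def insFace {r : ℕ} (u : Fin r → Two) (T : Finset (Fin r))
    (x : {s // s ∈ T} → Two) : Fin r → Two :=
  fun s => if h : s ∈ T then x ⟨s, h⟩ else u s

lemma insFace_monotone {r : ℕ} (u : Fin r → Two) (T : Finset (Fin r)) :
    Monotone (insFace u T) := by
  intro x y hxy s
  dsimp [insFace]
  split
  · exact hxy _
  · exact le_rfl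

/-- The face of a cube `F` with free coordinates `T` and base point `u`. -/
def faceFunctor {r : ℕ} (F : (Fin r → Two) ⥤ C) (u : Fin r → Two)
    (T : Finset (Fin r)) : ({s // s ∈ T} → Two) ⥤ C :=
  (insFace_monotone u T).functor ⋙ F

/-- The ℓ¹-norm of a vertex of the cube. -/
def normOf {r : ℕ} (v : Fin r → Two) : ℕ :=
  (Finset.univ.filter fun s => v s = ⊤).card

lemma two_cases (x : Two) : x = ⊥ ∨ x = ⊤ :=
  (show ∀ b : Bool, (b : Two) = ⊥ ∨ (b : Two) = ⊤ from fun b => by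
    cases b
    · exact Or.inl rfl
    · exact Or.inr rfl) x

lemma two_bot_ne_top : (⊥ : Two) ≠ ⊤ := fun h => Bool.false_ne_true h

lemma two_le_iff (x y : Two) : x ≤ y ↔ (x = ⊤ → y = ⊤) := by
  rcases two_cases x with h | h <;> rcases two_cases y with h2 | h2 <;> subst h <;> subst h2 <;>
    simp [le_refl, bot_le, two_bot_ne_top, two_bot_ne_top.symm]

lemma two_top_le {x : Two} (h : ⊤ ≤ x) : x = ⊤ := le_antisymm le_top h


instance : Fintype Two := inferInstanceAs (Fintype Bool)

instance fsubHomSubsingleton' {Q : Type} [Preorder Q] {A : Q → Prop}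
    (x y : ObjectProperty.FullSubcategory A) : Subsingleton (x ⟶ y) :=
  ⟨fun f g => ObjectProperty.hom_ext _ (Subsingleton.elim _ _)⟩

section General
variable {C : Type u} [Category.{v} C]
variable {J : Type} [Preorder J]

@[simps]
def ccAt (G : J ⥤ C) (D : J → Prop) (v : J) (hD : ∀ x, D x → x ≤ v) :
    Cocone (ObjectProperty.ι D ⋙ G) where
  pt := G.obj v
  ι := { app := fun x => G.map (homOfLE (hD x.1 x.2))
         naturality := fun x y f => by
          dsimp
          rw [Category.comp_id, ← G.map_comp]
          exact congrArg G.map (Subsingleton.elim _ _) }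

@[simps]
def resCocone {A B : J → Prop} (h : ∀ x, A x → B x) {G : J ⥤ C}
    (c : Cocone (ObjectProperty.ι B ⋙ G)) :
    Cocone (ObjectProperty.ι A ⋙ G) where
  pt := c.pt
  ι := { app := fun x => c.ι.app ⟨x.1, h x.1 x.2⟩
         naturality := fun x y f => by
          have := c.ι.naturality (X := ⟨x.1, h x.1 x.2⟩) (Y := ⟨y.1, h y.1 y.2⟩) (ObjectProperty.homMk f.hom)
          dsimp at this ⊢
          rw [Category.comp_id] at this ⊢
          exact this }

/-- transport of `IsColimit` across a pointwise iff of predicates -/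
def resIsColimit {A B : J → Prop} (h : ∀ x, A x ↔ B x) {G : J ⥤ C}
    (c : Cocone (ObjectProperty.ι B ⋙ G)) (hc : IsColimit c) :
    IsColimit (resCocone (fun x => (h x).1) c) where
  desc s := hc.desc (resCocone (fun x => (h x).2) s)
  fac s x := by
    have := hc.fac (resCocone (fun x => (h x).2) s) ⟨x.1, (h x.1).1 x.2⟩
    dsimp at this ⊢
    exact this
  uniq s m hm := by
    refine hc.uniq (resCocone (fun x => (h x).2) s) m (fun y => ?_)
    have := hm ⟨y.1, (h y.1).2 y.2⟩
    dsimp at this ⊢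
    exact this

def resIsColimit' {A B : J → Prop} (h : ∀ x, A x ↔ B x) {G : J ⥤ C}
    (c : Cocone (ObjectProperty.ι B ⋙ G))
    (hc : IsColimit (resCocone (fun x => (h x).1) c)) : IsColimit c where
  desc s := hc.desc (resCocone (fun x => (h x).1) s)
  fac s x := by
    have := hc.fac (resCocone (fun x => (h x).1) s) ⟨x.1, (h x.1).2 x.2⟩
    dsimp at this ⊢
    exact this
  uniq s m hm := by
    refine hc.uniq (resCocone (fun x => (h x).1) s) m (fun y => ?_)
    have := hm ⟨y.1, (h y.1).1 y.2⟩
    dsimp at this ⊢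
    exact this

/-- transport for `ccAt` colimits along predicate iffs. -/
lemma colim_congr {A B : J → Prop} (h : ∀ x, A x ↔ B x) {G : J ⥤ C} {v : J}
    {hA : ∀ x, A x → x ≤ v} {hB : ∀ x, B x → x ≤ v}
    (hc : Nonempty (IsColimit (ccAt G B v hB))) :
    Nonempty (IsColimit (ccAt G A v hA)) :=
  ⟨resIsColimit h _ hc.some⟩

section Step
variable {G : J ⥤ C} {A B : J → Prop}

lemma ccAt_map_eq {D : J → Prop} {v : J} {hD : ∀ x, D x → x ≤ v} (x : ObjectProperty.FullSubcategory D)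
    (f : x.1 ⟶ v) : (ccAt G D v hD).ι.app x = G.map f := congrArg G.map (Subsingleton.elim _ _)

/-- If every element of `B \ A` is canonically a colimit over its `A`-part, then a cocone over
`B` is colimiting as soon as its restriction to `A` is. -/
def genUp (hAB : ∀ x, A x → B x)
    (hgen : ∀ x, B x → ¬ A x → IsColimit (ccAt G (fun y => A y ∧ y ≤ x) x (fun _ h => h.2)))
    (c : Cocone (ObjectProperty.ι B ⋙ G))
    (hres : IsColimit (resCocone hAB c)) : IsColimit c where
  desc s := hres.desc (resCocone hAB s)
  fac s x := by
    by_cases hx : A x.1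
    · exact hres.fac (resCocone hAB s) ⟨x.1, hx⟩
    · refine (hgen x.1 x.2 hx).hom_ext (fun a => ?_)
      have hc1 : G.map (homOfLE a.2.2) ≫ c.ι.app x = c.ι.app ⟨a.1, hAB _ a.2.1⟩ := by
        have := c.ι.naturality (X := ⟨a.1, hAB _ a.2.1⟩) (Y := x) (ObjectProperty.homMk (homOfLE a.2.2))
        dsimp at this; rwa [Category.comp_id] at this
      have hs1 : G.map (homOfLE a.2.2) ≫ s.ι.app x = s.ι.app ⟨a.1, hAB _ a.2.1⟩ := by
        have := s.ι.naturality (X := ⟨a.1, hAB _ a.2.1⟩) (Y := x) (ObjectProperty.homMk (homOfLE a.2.2))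
        dsimp at this; rwa [Category.comp_id] at this
      erw [ccAt_map_eq a (homOfLE a.2.2), ← Category.assoc]
      erw [hc1]
      erw [hs1]
      exact hres.fac (resCocone hAB s) ⟨a.1, a.2.1⟩
  uniq s m hm :=
    hres.uniq (resCocone hAB s) m (fun y => hm ⟨y.1, hAB _ y.2⟩)

/-- auxiliary cocone -/
@[simps]
def extAux {G : J ⥤ C} {A : J → Prop} (s : Cocone (ObjectProperty.ι A ⋙ G)) (y : J) :
    Cocone (ObjectProperty.ι (fun a => A a ∧ a ≤ y) ⋙ G) where
  pt := s.pt
  ι := { app := fun a => s.ι.app ⟨a.1, a.2.1⟩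
         naturality := fun a a' f => by
          have := s.ι.naturality (X := ⟨a.1, a.2.1⟩) (Y := ⟨a'.1, a'.2.1⟩) (ObjectProperty.homMk f.hom)
          dsimp at this ⊢; rwa [Category.comp_id] at this ⊢ }

/-- The cocone over `B` extending a cocone over `A`, using the canonical colimits. -/
noncomputable def extCocone [DecidablePred A] (hAB : ∀ x, A x → B x)
    (hgen : ∀ x, B x → ¬ A x → IsColimit (ccAt G (fun y => A y ∧ y ≤ x) x (fun _ h => h.2)))
    (s : Cocone (ObjectProperty.ι A ⋙ G)) :
    Cocone (ObjectProperty.ι B ⋙ G) where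
  pt := s.pt
  ι := { app := fun x =>
          if h : A x.1 then s.ι.app ⟨x.1, h⟩ else (hgen x.1 x.2 h).desc (extAux s x.1)
         naturality := fun x y f => by
          dsimp
          rw [Category.comp_id]
          by_cases hy : A y.1
          · erw [dif_pos hy]
            by_cases hx : A x.1
            · erw [dif_pos hx]
              have := s.ι.naturality (X := ⟨x.1, hx⟩) (Y := ⟨y.1, hy⟩) (ObjectProperty.homMk f.hom)
              dsimp at this; rwa [Category.comp_id] at this
            · erw [dif_neg hx]
              refine (hgen x.1 x.2 hx).hom_ext (fun a => ?_)
              erw [(hgen x.1 x.2 hx).fac (extAux s x.1) a]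
              erw [ccAt_map_eq a (homOfLE a.2.2), ← Category.assoc, ← G.map_comp]
              have h3 : (homOfLE a.2.2 ≫ f.hom : a.1 ⟶ y.1) =
                  homOfLE (a.2.2.trans (leOfHom f.hom)) := Subsingleton.elim _ _
              rw [h3]
              have := s.ι.naturality (X := ⟨a.1, a.2.1⟩) (Y := ⟨y.1, hy⟩)
                (ObjectProperty.homMk (homOfLE (a.2.2.trans (leOfHom f.hom))))
              dsimp [extAux] at this ⊢; rwa [Category.comp_id] at this
          · erw [dif_neg hy]
            by_cases hx : A x.1
            · erw [dif_pos hx]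
              have h4 := (hgen y.1 y.2 hy).fac (extAux s y.1) ⟨x.1, ⟨hx, leOfHom f.hom⟩⟩
              rw [ccAt_map_eq (G := G) (⟨x.1, ⟨hx, leOfHom f.hom⟩⟩ : ObjectProperty.FullSubcategory fun a => A a ∧ a ≤ y.1) f.hom] at h4
              dsimp [extAux] at h4 ⊢
              exact h4
            · erw [dif_neg hx]
              refine (hgen x.1 x.2 hx).hom_ext (fun a => ?_)
              erw [(hgen x.1 x.2 hx).fac (extAux s x.1) a]
              erw [ccAt_map_eq a (homOfLE a.2.2), ← Category.assoc, ← G.map_comp]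
              have h3 : (homOfLE a.2.2 ≫ f.hom : a.1 ⟶ y.1) =
                  homOfLE (a.2.2.trans (leOfHom f.hom)) := Subsingleton.elim _ _
              rw [h3]
              have h4 := (hgen y.1 y.2 hy).fac (extAux s y.1)
                ⟨a.1, ⟨a.2.1, a.2.2.trans (leOfHom f.hom)⟩⟩
              rw [ccAt_map_eq (G := G)
                (⟨a.1, ⟨a.2.1, a.2.2.trans (leOfHom f.hom)⟩⟩ : ObjectProperty.FullSubcategory fun t => A t ∧ t ≤ y.1)
                (homOfLE (a.2.2.trans (leOfHom f.hom)))] at h4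
              dsimp [extAux] at h4 ⊢
              exact h4 }

/-- Restriction of a colimiting cocone over `B` to `A` is colimiting. -/
noncomputable def genDown [DecidablePred A] (hAB : ∀ x, A x → B x)
    (hgen : ∀ x, B x → ¬ A x → IsColimit (ccAt G (fun y => A y ∧ y ≤ x) x (fun _ h => h.2)))
    (c : Cocone (ObjectProperty.ι B ⋙ G))
    (hc : IsColimit c) : IsColimit (resCocone hAB c) where
  desc s := hc.desc (extCocone hAB hgen s)
  fac s x := by
    have := hc.fac (extCocone hAB hgen s) ⟨x.1, hAB _ x.2⟩
    dsimp [extCocone] at this ⊢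
    erw [dif_pos x.2] at this
    exact this
  uniq s m hm := by
    refine hc.uniq (extCocone hAB hgen s) m (fun y => ?_)
    dsimp [extCocone]
    by_cases hy : A y.1
    · erw [dif_pos hy]; exact hm ⟨y.1, hy⟩
    · erw [dif_neg hy]
      refine (hgen y.1 y.2 hy).hom_ext (fun a => ?_)
      erw [(hgen y.1 y.2 hy).fac (extAux s y.1) a]
      erw [ccAt_map_eq a (homOfLE a.2.2), ← Category.assoc]
      have hc1 : G.map (homOfLE a.2.2) ≫ c.ι.app y = c.ι.app ⟨a.1, hAB _ a.2.1⟩ := by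
        have := c.ι.naturality (X := ⟨a.1, hAB _ a.2.1⟩) (Y := y) (ObjectProperty.homMk (homOfLE a.2.2))
        dsimp at this; rwa [Category.comp_id] at this
      erw [hc1]
      dsimp [extAux]
      exact hm ⟨a.1, a.2.1⟩

end Step

section Fin
variable {G : J ⥤ C} {A B : J → Prop}

/-- The inclusion of full subposets. -/
def subMap (hAB : ∀ x, A x → B x) : ObjectProperty.FullSubcategory A ⥤ ObjectProperty.FullSubcategory B where
  obj x := ⟨x.1, hAB x.1 x.2⟩
  map f := ObjectProperty.homMk f.hom

lemma subMap_final (hAB : ∀ x, A x → B x)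
    (hmin : ∀ b, B b → ∃ m, A m ∧ b ≤ m ∧ ∀ w, A w → b ≤ w → m ≤ w) :
    (subMap hAB).Final := by
  constructor
  intro b
  obtain ⟨m, hmA, hbm, hmin'⟩ := hmin b.1 b.2
  have : Nonempty (CategoryTheory.StructuredArrow b (subMap hAB)) :=
    ⟨CategoryTheory.StructuredArrow.mk (Y := (⟨m, hmA⟩ : ObjectProperty.FullSubcategory A)) (ObjectProperty.homMk (homOfLE hbm))⟩
  apply zigzag_isConnected
  intro j₁ j₂
  have hj : ∀ j : CategoryTheory.StructuredArrow b (subMap hAB),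
      Zigzag j (CategoryTheory.StructuredArrow.mk (Y := (⟨m, hmA⟩ : ObjectProperty.FullSubcategory A)) (ObjectProperty.homMk (homOfLE hbm))) := by
    intro j
    refine Zigzag.of_inv (CategoryTheory.StructuredArrow.homMk ?_ ?_)
    · exact ObjectProperty.homMk (homOfLE (hmin' j.right.1 j.right.2 (leOfHom j.hom.hom)))
    · exact Subsingleton.elim _ _
  exact (hj j₁).trans (hj j₂).symm


lemma fin_iff (hAB : ∀ x, A x → B x)
    (hmin : ∀ b, B b → ∃ m, A m ∧ b ≤ m ∧ ∀ w, A w → b ≤ w → m ≤ w)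
    (c : Cocone (ObjectProperty.ι B ⋙ G)) :
    Nonempty (IsColimit c) ↔ Nonempty (IsColimit (resCocone hAB c)) := by
  letI : (subMap hAB).Final := subMap_final hAB hmin
  constructor
  · rintro ⟨h⟩
    exact ⟨((Functor.Final.isColimitWhiskerEquiv (subMap hAB) c).symm h :
      IsColimit (c.whisker (subMap hAB)))⟩
  · rintro ⟨h⟩
    exact ⟨(Functor.Final.isColimitWhiskerEquiv (subMap hAB) c)
      (h : IsColimit (c.whisker (subMap hAB)))⟩

end Fin

/-- If the apex belongs to the subset, the canonical cocone is colimiting. -/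
def ccAtSelf (G : J ⥤ C) (D : J → Prop) (v : J) (hD : ∀ x, D x → x ≤ v) (hv : D v) :
    IsColimit (ccAt G D v hD) where
  desc s := s.ι.app ⟨v, hv⟩
  fac s x := by
    have := s.ι.naturality (X := x) (Y := ⟨v, hv⟩) (ObjectProperty.homMk (homOfLE (hD x.1 x.2)))
    dsimp at this ⊢
    rw [Category.comp_id] at this
    exact this
  uniq s m hm := by
    have h1 := hm ⟨v, hv⟩
    have h2 : (ccAt G D v hD).ι.app ⟨v, hv⟩ = 𝟙 _ := by
      rw [ccAt_map_eq (G := G) ⟨v, hv⟩ (𝟙 v)]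
      exact G.map_id v
    erw [h2, Category.id_comp] at h1
    exact h1

end General

section Norm
variable {r : ℕ}

lemma le_coords {u v : Fin r → Two} : u ≤ v ↔ ∀ s, u s = ⊤ → v s = ⊤ := by
  constructor
  · intro h s hs
    exact (two_le_iff _ _).1 (h s) hs
  · intro h s
    exact (two_le_iff _ _).2 (h s)

lemma normOf_mono {u v : Fin r → Two} (h : u ≤ v) : normOf u ≤ normOf v := by
  apply Finset.card_le_card
  intro s hs
  simp only [Finset.mem_filter, Finset.mem_univ, true_and] at hs ⊢
  exact le_coords.1 h s hs

lemma exists_coord {u v : Fin r → Two} (h : u ≤ v) (hne : u ≠ v) :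
    ∃ s, u s = ⊥ ∧ v s = ⊤ := by
  have : ∃ s, u s ≠ v s := by
    by_contra hc
    push_neg at hc
    exact hne (funext hc)
  obtain ⟨s, hs⟩ := this
  rcases two_cases (u s) with h1 | h1
  · rcases two_cases (v s) with h2 | h2
    · exact absurd (h1.trans h2.symm) hs
    · exact ⟨s, h1, h2⟩
  · exact absurd (h1.trans (le_coords.1 h s h1).symm) hs

lemma normOf_lt {u v : Fin r → Two} (h : u ≤ v) (hne : u ≠ v) : normOf u < normOf v := by
  apply Finset.card_lt_card
  constructor
  · intro s hs
    simp only [Finset.mem_filter, Finset.mem_univ, true_and] at hs ⊢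
    exact le_coords.1 h s hs
  · intro hc
    obtain ⟨s, h1, h2⟩ := exists_coord h hne
    have := hc (by simp only [Finset.mem_filter, Finset.mem_univ, true_and]; exact h2)
    simp only [Finset.mem_filter, Finset.mem_univ, true_and] at this
    exact two_bot_ne_top (h1.symm.trans this)

lemma update_bot_le (v : Fin r → Two) (s : Fin r) : Function.update v s ⊥ ≤ v := by
  intro t
  by_cases ht : t = s
  · subst ht; rw [Function.update_self]; exact bot_le
  · rw [Function.update_of_ne ht]

lemma le_update_top (u : Fin r → Two) (s : Fin r) : u ≤ Function.update u s ⊤ := by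
  intro t
  by_cases ht : t = s
  · subst ht; rw [Function.update_self]; exact le_top
  · rw [Function.update_of_ne ht]

lemma update_bot_le_update_bot {u v : Fin r → Two} (h : u ≤ v) (s : Fin r) :
    Function.update u s ⊥ ≤ Function.update v s ⊥ := by
  intro t
  by_cases ht : t = s
  · subst ht; rw [Function.update_self]; exact bot_le
  · rw [Function.update_of_ne ht, Function.update_of_ne ht]; exact h t

lemma not_le_update_bot {v : Fin r → Two} {s : Fin r} (h : v s = ⊤) :
    ¬ v ≤ Function.update v s ⊥ := by
  intro hc
  have := le_coords.1 hc s h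
  rw [Function.update_self] at this
  exact two_bot_ne_top this

lemma ne_update_bot {v : Fin r → Two} {s : Fin r} (h : v s = ⊤) :
    v ≠ Function.update v s ⊥ := fun hc => not_le_update_bot h (le_of_eq hc)

lemma normOf_update_bot {v : Fin r → Two} {s : Fin r} (h : v s = ⊤) :
    normOf (Function.update v s ⊥) + 1 = normOf v := by
  have he : (Finset.univ.filter fun t => Function.update v s ⊥ t = ⊤) =
      (Finset.univ.filter fun t => v t = ⊤).erase s := by
    ext t
    simp only [Finset.mem_filter, Finset.mem_univ, true_and, Finset.mem_erase]
    by_cases ht : t = s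
    · subst ht
      simp only [Function.update_self, ne_eq, not_true_eq_false, false_and,
        iff_false]
      exact fun hc => two_bot_ne_top hc
    · rw [Function.update_of_ne ht]
      exact ⟨fun h2 => ⟨ht, h2⟩, fun h2 => h2.2⟩
  have hmem : s ∈ Finset.univ.filter fun t => v t = ⊤ := by
    simp only [Finset.mem_filter, Finset.mem_univ, true_and]; exact h
  have hpos : 0 < (Finset.univ.filter fun t => v t = ⊤).card := Finset.card_pos.2 ⟨s, hmem⟩
  rw [normOf, he, Finset.card_erase_of_mem hmem]
  show (Finset.univ.filter fun t => v t = ⊤).card - 1 + 1 = normOf v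
  rw [normOf]
  omega

lemma normOf_update_top {u : Fin r → Two} {s : Fin r} (h : u s = ⊥) :
    normOf (Function.update u s ⊤) = normOf u + 1 := by
  have hs : Function.update u s ⊤ s = ⊤ := Function.update_self s ⊤ u
  have h2 := normOf_update_bot (v := Function.update u s ⊤) (s := s) hs
  have h3 : Function.update (Function.update u s ⊤) s ⊥ = u := by
    funext t
    by_cases ht : t = s
    · subst ht; rw [Function.update_self]; exact h.symm
    · rw [Function.update_of_ne ht, Function.update_of_ne ht]
  rw [h3] at h2
  omega

lemma le_of_norm_zero {u : Fin r → Two} (h : normOf u = 0) (w : Fin r → Two) : u ≤ w := by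
  refine le_coords.2 (fun s hs => ?_)
  exfalso
  have : s ∈ Finset.univ.filter fun t => u t = ⊤ := by
    simp only [Finset.mem_filter, Finset.mem_univ, true_and]; exact hs
  rw [Finset.card_eq_zero.1 h] at this
  exact absurd this (Finset.notMem_empty s)

lemma sup_ne {b u v : Fin r → Two} {s : Fin r} (hvs : v s = ⊤) (hb : b ≤ v) (hbne : b ≠ v)
    (hbne' : b ≠ Function.update v s ⊥) (hub : ∀ t, t ≠ s → u t ≤ b t) : b ⊔ u ≠ v := by
  intro hsup
  have hbt : ∀ t, t ≠ s → b t = v t := by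
    intro t ht
    rcases two_cases (b t) with h1 | h1
    · rcases two_cases (v t) with h2 | h2
      · rw [h1, h2]
      · exfalso
        have h3 : b t ⊔ u t = v t := congrFun hsup t
        rw [h1, h2, bot_sup_eq] at h3
        have h4 := hub t ht
        rw [h3, h1] at h4
        exact two_bot_ne_top (two_top_le h4)
    · rw [h1, (two_le_iff _ _).1 (hb t) h1]
  rcases two_cases (b s) with h1 | h1
  · refine hbne' (funext fun t => ?_)
    by_cases ht : t = s
    · subst ht; rw [Function.update_self]; exact h1
    · rw [Function.update_of_ne ht]; exact hbt t ht
  · refine hbne (funext fun t => ?_)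
    by_cases ht : t = s
    · subst ht; rw [hvs]; exact h1
    · exact hbt t ht

end Norm


section Comb
variable {C : Type u} [Category.{v} C] {r : ℕ} (F : (Fin r → Two) ⥤ C) (p : ℕ)

/-- Pointwise Kan condition. -/
def Cond1 : Prop := ∀ v : Fin r → Two,
  Nonempty (IsColimit (ccAt F (fun w => normOf w ≤ p ∧ w ≤ v) v (fun _ h => h.2)))

/-- Punctured-cube condition at vertices of norm `≥ p+1`. -/
def Cond2 : Prop := ∀ v : Fin r → Two, p + 1 ≤ normOf v →
  Nonempty (IsColimit (ccAt F (fun w => w ≤ v ∧ w ≠ v) v (fun _ h => h.1)))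

/-- Face-colimit condition for the interval `[u, v]`. -/
def CondD (u v : Fin r → Two) : Prop :=
  Nonempty (IsColimit (ccAt F (fun w => u ≤ w ∧ w ≤ v ∧ w ≠ v) v (fun _ h => h.2.1)))

/-- Faces of dimension exactly `p+1`. -/
def Cond3 : Prop := ∀ u v : Fin r → Two, u ≤ v → normOf v = normOf u + (p + 1) → CondD F u v

lemma cond1_to_cond2 (h1 : Cond1 F p) : Cond2 F p := by
  intro v hv
  have hAB : ∀ x, (normOf x ≤ p ∧ x ≤ v) → (x ≤ v ∧ x ≠ v) := by
    intro x hx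
    refine ⟨hx.2, fun he => ?_⟩
    subst he; omega
  refine ⟨genUp hAB (fun x hBx hnAx => ?_) _ ?_⟩
  · refine (colim_congr (fun y => ?_) (h1 x)).some
    exact ⟨fun h => ⟨h.1.1, h.2⟩, fun h => ⟨⟨h.1, h.2.trans hBx.1⟩, h.2⟩⟩
  · exact (h1 v).some

lemma cond2_to_cond1 (h2 : Cond2 F p) : Cond1 F p := by
  have H : ∀ n, ∀ v : Fin r → Two, normOf v ≤ n →
      Nonempty (IsColimit (ccAt F (fun w => normOf w ≤ p ∧ w ≤ v) v (fun _ h => h.2))) := by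
    intro n
    induction n with
    | zero =>
      intro v hv
      exact ⟨ccAtSelf _ _ _ _ ⟨by omega, le_rfl⟩⟩
    | succ n IH =>
      intro v hv
      by_cases hvp : normOf v ≤ p
      · exact ⟨ccAtSelf _ _ _ _ ⟨hvp, le_rfl⟩⟩
      · classical
        have hAB : ∀ x, (normOf x ≤ p ∧ x ≤ v) → (x ≤ v ∧ x ≠ v) := by
          intro x hx
          refine ⟨hx.2, fun he => ?_⟩
          subst he; omega
        refine ⟨genDown hAB (fun x hBx hnAx => ?_) _ (h2 v (by omega)).some⟩
        have hxv : normOf x < normOf v := normOf_lt hBx.1 hBx.2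
        refine (colim_congr (fun y => ?_) (IH x (by omega))).some
        exact ⟨fun h => ⟨h.1.1, h.2⟩, fun h => ⟨⟨h.1, h.2.trans hBx.1⟩, h.2⟩⟩
  exact fun v => H (normOf v) v le_rfl

lemma cond2_to_condD (h2 : Cond2 F p) :
    ∀ u v : Fin r → Two, u ≤ v → normOf u + (p + 1) ≤ normOf v → CondD F u v := by
  have H : ∀ n, ∀ u : Fin r → Two, normOf u ≤ n → ∀ v : Fin r → Two, u ≤ v →
      normOf u + (p + 1) ≤ normOf v → CondD F u v := by
    intro n
    induction n with
    | zero =>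
      intro u hu v huv hn
      refine colim_congr (fun y => ?_) (h2 v (by omega))
      exact ⟨fun h => ⟨h.2.1, h.2.2⟩, fun h => ⟨le_of_norm_zero (by omega) y, h.1, h.2⟩⟩
    | succ n IH =>
      intro u hu v huv hn
      by_cases hu0 : normOf u = 0
      · refine colim_congr (fun y => ?_) (h2 v (by omega))
        exact ⟨fun h => ⟨h.2.1, h.2.2⟩, fun h => ⟨le_of_norm_zero hu0 y, h.1, h.2⟩⟩
      · classical
        have hune : u ≠ (⊥ : Fin r → Two) := by
          intro he
          apply hu0
          have : ∀ s, ¬ (u s = ⊤) := by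
            intro s hs
            rw [he] at hs
            exact two_bot_ne_top hs
          rw [normOf, Finset.card_eq_zero, Finset.filter_eq_empty_iff]
          exact fun {x} _ => this x
        obtain ⟨s, hs⟩ : ∃ s, u s = ⊤ := by
          by_contra hc
          push_neg at hc
          apply hu0
          rw [normOf, Finset.card_eq_zero, Finset.filter_eq_empty_iff]
          exact fun {x} _ => hc x
        set u' := Function.update u s ⊥ with hu'def
        set v' := Function.update v s ⊥ with hv'def
        have hvs : v s = ⊤ := le_coords.1 huv s hs
        have hnu : normOf u' + 1 = normOf u := normOf_update_bot hs
        have hnv : normOf v' + 1 = normOf v := normOf_update_bot hvs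
        have hu'u : u' ≤ u := update_bot_le u s
        have hu'v' : u' ≤ v' := update_bot_le_update_bot huv s
        have hv'v : v' ≤ v := update_bot_le v s
        have hvnv' : v ≠ v' := ne_update_bot hvs
        have hnotvv' : ¬ v ≤ v' := not_le_update_bot hvs
        -- total cube over [u', v]
        have htotal : CondD F u' v := IH u' (by omega) v (hu'u.trans huv) (by omega)
        -- bottom face over [u', v']
        have hbottom : CondD F u' v' := IH u' (by omega) v' hu'v' (by omega)
        -- remove v' using genDown
        have hA0D : ∀ x, (u' ≤ x ∧ x ≤ v ∧ x ≠ v ∧ x ≠ v') → (u' ≤ x ∧ x ≤ v ∧ x ≠ v) :=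
          fun x hx => ⟨hx.1, hx.2.1, hx.2.2.1⟩
        have hstep : Nonempty (IsColimit (ccAt F (fun w => u' ≤ w ∧ w ≤ v ∧ w ≠ v ∧ w ≠ v') v
            (fun _ h => h.2.1))) := by
          refine ⟨genDown hA0D (fun x hDx hnx => ?_) _ htotal.some⟩
          have hx : x = v' := by
            by_contra hc
            exact hnx ⟨hDx.1, hDx.2.1, hDx.2.2, hc⟩
          subst hx
          refine (colim_congr (fun y => ?_) hbottom).some
          constructor
          · rintro ⟨⟨h1, h2, h3, h4⟩, h5⟩
            exact ⟨h1, h5, h4⟩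
          · rintro ⟨h1, h2, h3⟩
            refine ⟨⟨h1, h2.trans hv'v, fun he => ?_, h3⟩, h2⟩
            subst he; exact hnotvv' h2
        -- finality to pass to [u, v)
        have hAB : ∀ x, (u ≤ x ∧ x ≤ v ∧ x ≠ v) → (u' ≤ x ∧ x ≤ v ∧ x ≠ v ∧ x ≠ v') := by
          intro x hx
          refine ⟨hu'u.trans hx.1, hx.2.1, hx.2.2, fun he => ?_⟩
          have := le_coords.1 hx.1 s hs
          rw [he] at this
          rw [hv'def, Function.update_self] at this
          exact two_bot_ne_top this
        have hmin : ∀ b, (u' ≤ b ∧ b ≤ v ∧ b ≠ v ∧ b ≠ v') → ∃ m,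
            (u ≤ m ∧ m ≤ v ∧ m ≠ v) ∧ b ≤ m ∧
            ∀ w, (u ≤ w ∧ w ≤ v ∧ w ≠ v) → b ≤ w → m ≤ w := by
          intro b hb
          refine ⟨b ⊔ u, ⟨le_sup_right, sup_le hb.2.1 huv, ?_⟩, le_sup_left,
            fun w hw hbw => sup_le hbw hw.1⟩
          refine sup_ne hvs hb.2.1 hb.2.2.1 hb.2.2.2 (fun t ht => ?_)
          have := hb.1 t
          rwa [hu'def, Function.update_of_ne ht] at this
        exact (fin_iff hAB hmin _).1 hstep
  exact fun u v huv hn => H (normOf u) u le_rfl v huv hn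

lemma cond3_to_condD (h3 : Cond3 F p) :
    ∀ d, p + 1 ≤ d → ∀ u v : Fin r → Two, u ≤ v → normOf v = normOf u + d → CondD F u v := by
  intro d
  induction d with
  | zero => omega
  | succ d IH =>
    intro hd u v huv hn
    by_cases hdp : d + 1 = p + 1
    · exact h3 u v huv (by omega)
    · classical
      have hd' : p + 1 ≤ d := by omega
      have hune : u ≠ v := fun he => by subst he; omega
      obtain ⟨s, hus, hvs⟩ := exists_coord huv hune
      set u' := Function.update u s ⊤ with hu'def
      set v' := Function.update v s ⊥ with hv'def
      have hnu : normOf u' = normOf u + 1 := normOf_update_top hus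
      have hnv : normOf v' + 1 = normOf v := normOf_update_bot hvs
      have huu' : u ≤ u' := le_update_top u s
      have hv'v : v' ≤ v := update_bot_le v s
      have hvnv' : v ≠ v' := ne_update_bot hvs
      have hnotvv' : ¬ v ≤ v' := not_le_update_bot hvs
      have hu'v : u' ≤ v := by
        refine le_coords.2 (fun t ht => ?_)
        by_cases hts : t = s
        · subst hts; exact hvs
        · rw [hu'def, Function.update_of_ne hts] at ht
          exact le_coords.1 huv t ht
      have huv' : u ≤ v' := by
        refine le_coords.2 (fun t ht => ?_)
        by_cases hts : t = s
        · subst hts; exact absurd (hus.symm.trans ht) two_bot_ne_top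
        · rw [hv'def, Function.update_of_ne hts]
          exact le_coords.1 huv t ht
      -- top face over [u', v]
      have htop : CondD F u' v := IH hd' u' v hu'v (by omega)
      -- bottom face over [u, v']
      have hbot : CondD F u v' := IH hd' u v' huv' (by omega)
      -- finality from [u', v) to [u,v) minus v'
      have hAB : ∀ x, (u' ≤ x ∧ x ≤ v ∧ x ≠ v) → (u ≤ x ∧ x ≤ v ∧ x ≠ v ∧ x ≠ v') := by
        intro x hx
        refine ⟨huu'.trans hx.1, hx.2.1, hx.2.2, fun he => ?_⟩
        have := le_coords.1 hx.1 s (by rw [hu'def, Function.update_self])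
        rw [he, hv'def, Function.update_self] at this
        exact two_bot_ne_top this
      have hmin : ∀ b, (u ≤ b ∧ b ≤ v ∧ b ≠ v ∧ b ≠ v') → ∃ m,
          (u' ≤ m ∧ m ≤ v ∧ m ≠ v) ∧ b ≤ m ∧
          ∀ w, (u' ≤ w ∧ w ≤ v ∧ w ≠ v) → b ≤ w → m ≤ w := by
        intro b hb
        refine ⟨b ⊔ u', ⟨le_sup_right, sup_le hb.2.1 hu'v, ?_⟩, le_sup_left,
          fun w hw hbw => sup_le hbw hw.1⟩
        refine sup_ne hvs hb.2.1 hb.2.2.1 hb.2.2.2 (fun t ht => ?_)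
        rw [hu'def, Function.update_of_ne ht]
        exact hb.1 t
      have hA0 : Nonempty (IsColimit (ccAt F (fun w => u ≤ w ∧ w ≤ v ∧ w ≠ v ∧ w ≠ v') v
          (fun _ h => h.2.1))) := (fin_iff hAB hmin _).2 htop
      -- add v' back using genUp
      have hA0D : ∀ x, (u ≤ x ∧ x ≤ v ∧ x ≠ v ∧ x ≠ v') → (u ≤ x ∧ x ≤ v ∧ x ≠ v) :=
        fun x hx => ⟨hx.1, hx.2.1, hx.2.2.1⟩
      refine ⟨genUp hA0D (fun x hDx hnx => ?_) _ hA0.some⟩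
      have hx : x = v' := by
        by_contra hc
        exact hnx ⟨hDx.1, hDx.2.1, hDx.2.2, hc⟩
      subst hx
      refine (colim_congr (fun y => ?_) hbot).some
      constructor
      · rintro ⟨⟨h1, h2, h3, h4⟩, h5⟩
        exact ⟨h1, h5, h4⟩
      · rintro ⟨h1, h2, h3⟩
        refine ⟨⟨h1, h2.trans hv'v, fun he => ?_, h3⟩, h2⟩
        subst he; exact hnotvv' h2

lemma cond2_iff_cond3 : Cond2 F p ↔ Cond3 F p := by
  constructor
  · intro h2 u v huv hn
    exact cond2_to_condD F p h2 u v huv (by omega)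
  · intro h3 v hv
    have := cond3_to_condD F p h3 (normOf v) hv (fun _ => ⊥) v
      (fun s => bot_le) (by
        have h0 : normOf (fun _ : Fin r => (⊥ : Two)) = 0 := by
          rw [normOf, Finset.card_eq_zero, Finset.filter_eq_empty_iff]
          exact fun {x} _ hx => two_bot_ne_top hx
        omega)
    refine colim_congr (fun y => ?_) this
    exact ⟨fun h => ⟨fun s => bot_le, h.1, h.2⟩, fun h => ⟨h.2.1, h.2.2⟩⟩

end Comb



section BridgeB
variable {C : Type u} [Category.{v} C] {r : ℕ}

lemma fsub_ext {Q : Type} [Preorder Q] {A : Q → Prop} (x y : ObjectProperty.FullSubcategory A)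
    (h : x.1 = y.1) : x = y := by
  cases x; cases y; cases h; rfl

variable (u : Fin r → Two) (T : Finset (Fin r))

lemma insFace_top_iff (x : {s // s ∈ T} → Two) :
    insFace u T x = insFace u T ⊤ ↔ x = ⊤ := by
  constructor
  · intro h
    funext s
    have := congrFun h s.1
    rw [insFace, insFace] at this
    simp only [s.2, dif_pos] at this
    exact this
  · intro h; rw [h]

lemma insFace_section {w : Fin r → Two} (h1 : insFace u T ⊥ ≤ w) (h2 : w ≤ insFace u T ⊤) :
    insFace u T (fun s => w s.1) = w := by
  funext t
  rw [insFace]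
  by_cases ht : t ∈ T
  · simp only [ht, dif_pos]
  · simp only [ht, dif_neg, not_false_iff]
    have hb := h1 t
    have htp := h2 t
    rw [insFace] at hb htp
    simp only [ht, dif_neg, not_false_iff] at hb htp
    exact le_antisymm hb htp

/-- The punctured face as a full subposet of the cube. -/
def faceEquiv : ObjectProperty.FullSubcategory (fun x : {s // s ∈ T} → Two => x ≠ ⊤) ≌
    ObjectProperty.FullSubcategory (fun w : Fin r → Two =>
      insFace u T ⊥ ≤ w ∧ w ≤ insFace u T ⊤ ∧ w ≠ insFace u T ⊤) where
  functor :=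
    { obj := fun x => ⟨insFace u T x.1, insFace_monotone u T bot_le,
        insFace_monotone u T le_top, fun he => x.2 ((insFace_top_iff u T x.1).1 he)⟩
      map := fun f => ObjectProperty.homMk (homOfLE (insFace_monotone u T (leOfHom f.hom)))
      map_id := fun _ => Subsingleton.elim _ _
      map_comp := fun _ _ => Subsingleton.elim _ _ }
  inverse :=
    { obj := fun w => ⟨fun s => w.1 s.1, fun he => w.2.2.2 (by
        rw [← insFace_section u T w.2.1 w.2.2.1, he])⟩
      map := fun g => ObjectProperty.homMk (homOfLE (fun s => leOfHom g.hom s.1))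
      map_id := fun _ => Subsingleton.elim _ _
      map_comp := fun _ _ => Subsingleton.elim _ _ }
  unitIso := NatIso.ofComponents
    (fun x => eqToIso (fsub_ext _ _ (funext fun s =>
      (show insFace u T x.1 s.1 = x.1 s by
        rw [insFace]; simp only [s.2, dif_pos]).symm)))
    (fun f => Subsingleton.elim _ _)
  counitIso := NatIso.ofComponents
    (fun w => eqToIso (fsub_ext _ _ (insFace_section u T w.2.1 w.2.2.1)))
    (fun f => Subsingleton.elim _ _)
  functor_unitIso_comp := fun _ => Subsingleton.elim _ _

lemma bridgeB (F : (Fin r → Two) ⥤ C) :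
    IsCocartesianCube (faceFunctor F u T) ↔
      CondD F (insFace u T ⊥) (insFace u T ⊤) := by
  have hiso : ∀ (cc : Cocone (ObjectProperty.ι (fun x : {s // s ∈ T} → Two => x ≠ ⊤) ⋙
        faceFunctor F u T)), cc = (ccAt F (fun w => insFace u T ⊥ ≤ w ∧ w ≤ insFace u T ⊤ ∧
          w ≠ insFace u T ⊤) (insFace u T ⊤) (fun _ h => h.2.1)).whisker (faceEquiv u T).functor →
      (Nonempty (IsColimit cc) ↔ CondD F (insFace u T ⊥) (insFace u T ⊤)) := by
    intro cc hcc
    subst hcc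
    constructor
    · rintro ⟨h⟩
      exact ⟨IsColimit.ofWhiskerEquivalence (faceEquiv u T) h⟩
    · rintro ⟨h⟩
      exact ⟨h.whiskerEquivalence (faceEquiv u T)⟩
  refine hiso (cubeCocone (faceFunctor F u T)) ?_
  rfl

end BridgeB


section BridgeA
variable {C : Type u} [Category.{v} C] {r : ℕ}

instance subHomSubsingleton {Q : Type} [Preorder Q] {A : Q → Prop}
    (x y : ObjectProperty.FullSubcategory A) : Subsingleton (x ⟶ y) :=
  ⟨fun f g => ObjectProperty.hom_ext _ (Subsingleton.elim _ _)⟩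

instance costrHomSubsingleton {Q : Type} [Preorder Q] {A : Q → Prop} {v : Q}
    (g g' : CostructuredArrow (ObjectProperty.ι A) v) : Subsingleton (g ⟶ g') :=
  ⟨fun f1 f2 => CostructuredArrow.hom_ext f1 f2 (Subsingleton.elim _ _)⟩

/-- The comma category of the inclusion over `v` is the subposet `{w | A w ∧ w ≤ v}`. -/
def commaEquiv {Q : Type} [Preorder Q] (A : Q → Prop) (v : Q) :
    ObjectProperty.FullSubcategory (fun w => A w ∧ w ≤ v) ≌
      CostructuredArrow (ObjectProperty.ι A) v where
  functor :=
    { obj := fun x => CostructuredArrow.mk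
        (Y := (⟨x.1, x.2.1⟩ : ObjectProperty.FullSubcategory A)) (homOfLE x.2.2)
      map := fun f => CostructuredArrow.homMk (ObjectProperty.homMk f.hom) (Subsingleton.elim _ _)
      map_id := fun _ => Subsingleton.elim _ _
      map_comp := fun _ _ => Subsingleton.elim _ _ }
  inverse :=
    { obj := fun g => ⟨g.left.1, g.left.2, leOfHom g.hom⟩
      map := fun φ => ObjectProperty.homMk φ.left.hom
      map_id := fun _ => Subsingleton.elim _ _
      map_comp := fun _ _ => Subsingleton.elim _ _ }
  unitIso := NatIso.ofComponents
    (fun x => eqToIso (fsub_ext _ _ rfl))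
    (fun f => Subsingleton.elim _ _)
  counitIso := NatIso.ofComponents
    (fun g => CostructuredArrow.isoMk (eqToIso (fsub_ext _ _ rfl)) (Subsingleton.elim _ _))
    (fun f => Subsingleton.elim _ _)
  functor_unitIso_comp := fun _ => Subsingleton.elim _ _

noncomputable instance subFinCategory {A : (Fin r → Two) → Prop} :
    FinCategory (ObjectProperty.FullSubcategory A) := by
  have hfin : Finite (ObjectProperty.FullSubcategory A) :=
    Finite.of_injective (fun x => x.1) (fun a b h => fsub_ext a b h)
  exact { fintypeObj := Fintype.ofFinite _
          fintypeHom := fun j j' => Fintype.ofFinite _ }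

variable [HasFiniteColimits C]

instance hasColimCostr {A : (Fin r → Two) → Prop} {v : Fin r → Two}
    (G : CostructuredArrow (ObjectProperty.ι A) v ⥤ C) : HasColimit G := by
  have h1 : HasColimitsOfShape (ObjectProperty.FullSubcategory fun w : Fin r → Two => A w ∧ w ≤ v) C :=
    HasFiniteColimits.out _
  have h2 : HasColimitsOfShape (CostructuredArrow (ObjectProperty.ι A) v) C :=
    hasColimitsOfShape_of_equivalence (commaEquiv A v)
  exact @HasColimitsOfShape.has_colimit _ _ _ _ h2 G

/-- Comparison of the pointwise Kan cocone with the canonical poset cocone. -/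
noncomputable def kanCoconeIso (F : (Fin r → Two) ⥤ C) (p : ℕ) (v : Fin r → Two) :
    (show Cocone (ObjectProperty.ι (fun w : Fin r → Two => normOf w ≤ p ∧ w ≤ v) ⋙ F)
      from ((Functor.LeftExtension.mk F
        (𝟙 (ObjectProperty.ι (fun w : Fin r → Two => normOf w ≤ p) ⋙ F))).coconeAt
          v).whisker (commaEquiv (fun w : Fin r → Two => normOf w ≤ p) v).functor) ≅
      ccAt F (fun w => normOf w ≤ p ∧ w ≤ v) v (fun _ h => h.2) :=
  Cocones.ext (Iso.refl _) (fun j => by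
    dsimp [commaEquiv]
    erw [Category.comp_id]
    dsimp [Functor.LeftExtension.coconeAt]
    erw [Category.id_comp]
    try exact congrArg F.map (Subsingleton.elim _ _))

lemma bridgeA (F : (Fin r → Two) ⥤ C) (p : ℕ) :
    F.IsLeftKanExtension
        (𝟙 (ObjectProperty.ι (fun v : Fin r → Two => normOf v ≤ p) ⋙ F)) ↔
      Cond1 F p := by
  constructor
  · intro h
    intro v
    letI := h
    have pw := Functor.isPointwiseLeftKanExtensionOfIsLeftKanExtension
      (F := ObjectProperty.ι (fun v : Fin r → Two => normOf v ≤ p) ⋙ F) F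
      (𝟙 _)
    have h1 := (pw v).whiskerEquivalence (commaEquiv (fun w : Fin r → Two => normOf w ≤ p) v)
    exact ⟨h1.ofIsoColimit (kanCoconeIso F p v)⟩
  · intro h1
    have pw : (Functor.LeftExtension.mk F
        (𝟙 (ObjectProperty.ι (fun v : Fin r → Two => normOf v ≤ p) ⋙ F))).IsPointwiseLeftKanExtension := by
      intro v
      exact IsColimit.ofWhiskerEquivalence
        (commaEquiv (fun w : Fin r → Two => normOf w ≤ p) v)
        ((h1 v).some.ofIsoColimit (kanCoconeIso F p v).symm)
    exact pw.isLeftKanExtension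

end BridgeA


section Assembly
variable {C : Type u} [Category.{v} C] {r : ℕ}

lemma normOf_bot : normOf (fun _ : Fin r => (⊥ : Two)) = 0 := by
  rw [normOf, Finset.card_eq_zero, Finset.filter_eq_empty_iff]
  exact fun {x} _ hx => two_bot_ne_top hx

lemma insFace_bot_base (T : Finset (Fin r)) :
    insFace (fun _ => (⊥ : Two)) T ⊥ = fun _ => (⊥ : Two) := by
  funext t
  rw [insFace]
  by_cases h : t ∈ T
  · simp only [h, dif_pos]
    exact Pi.bot_apply _
  · simp only [h, dif_neg, not_false_iff]

lemma insFace_supp (v : Fin r → Two) :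
    insFace (fun _ => (⊥ : Two)) (Finset.univ.filter fun t => v t = ⊤) ⊤ = v := by
  funext t
  rw [insFace]
  by_cases h : t ∈ Finset.univ.filter fun t => v t = ⊤
  · simp only [h, dif_pos]
    rw [Finset.mem_filter] at h
    rw [h.2]
    exact Pi.top_apply _
  · simp only [h, dif_neg, not_false_iff]
    rw [Finset.mem_filter] at h
    push_neg at h
    rcases two_cases (v t) with h2 | h2
    · exact h2.symm
    · exact absurd (h2) (h (Finset.mem_univ t))

lemma normOf_insFace (u : Fin r → Two) (T : Finset (Fin r)) :
    normOf (insFace u T ⊤) = normOf (insFace u T ⊥) + T.card := by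
  have hA : (Finset.univ.filter fun t => insFace u T ⊤ t = ⊤) =
      T ∪ (Finset.univ.filter fun t => insFace u T ⊥ t = ⊤) := by
    ext t
    simp only [Finset.mem_filter, Finset.mem_univ, true_and, Finset.mem_union]
    rw [insFace, insFace]
    by_cases h : t ∈ T
    · simp [h, Pi.top_apply]
    · simp only [h, dif_neg, not_false_iff, false_or]
  have hd : Disjoint T (Finset.univ.filter fun t => insFace u T ⊥ t = ⊤) := by
    rw [Finset.disjoint_left]
    intro t ht hmem
    simp only [Finset.mem_filter, Finset.mem_univ, true_and] at hmem
    rw [insFace] at hmem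
    simp only [ht, dif_pos] at hmem
    rw [Pi.bot_apply] at hmem
    exact two_bot_ne_top hmem
  rw [normOf, normOf, hA, Finset.card_union_of_disjoint hd]
  omega

variable (F : (Fin r → Two) ⥤ C) (p : ℕ)

lemma facesBot_iff_cond2 :
    (∀ T : Finset (Fin r), p + 1 ≤ T.card →
        IsCocartesianCube (faceFunctor F (fun _ => (⊥ : Two)) T)) ↔ Cond2 F p := by
  constructor
  · intro h v hv
    set T := Finset.univ.filter fun t => v t = ⊤ with hT
    have hTc : T.card = normOf v := rfl
    have hc := (bridgeB (fun _ => (⊥ : Two)) T F).1 (h T (by omega))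
    rw [insFace_bot_base, insFace_supp] at hc
    refine colim_congr (fun y => ?_) hc
    exact ⟨fun h2 => ⟨fun s => bot_le, h2.1, h2.2⟩, fun h2 => ⟨h2.2.1, h2.2.2⟩⟩
  · intro h2 T hT
    refine (bridgeB (fun _ => (⊥ : Two)) T F).2 ?_
    have hn : normOf (insFace (fun _ => (⊥ : Two)) T ⊤) = T.card := by
      have := normOf_insFace (fun _ => (⊥ : Two)) T
      rw [insFace_bot_base, normOf_bot] at this
      omega
    have hc := h2 (insFace (fun _ => (⊥ : Two)) T ⊤) (by omega)
    refine colim_congr (fun y => ?_) hc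
    constructor
    · rintro ⟨h1, h3, h4⟩
      exact ⟨h3, h4⟩
    · rintro ⟨h3, h4⟩
      refine ⟨?_, h3, h4⟩
      rw [insFace_bot_base]
      exact fun s => bot_le

lemma facesAll_iff_cond3 :
    (∀ (u : Fin r → Two) (T : Finset (Fin r)), T.card = p + 1 →
        IsCocartesianCube (faceFunctor F u T)) ↔ Cond3 F p := by
  constructor
  · intro h u v huv hn
    set T := Finset.univ.filter (fun t => u t = ⊥ ∧ v t = ⊤) with hTdef
    have hb : insFace u T ⊥ = u := by
      funext t
      rw [insFace]
      by_cases ht : t ∈ T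
      · simp only [ht, dif_pos]
        rw [hTdef, Finset.mem_filter] at ht
        rw [Pi.bot_apply]
        exact ht.2.1.symm
      · simp only [ht, dif_neg, not_false_iff]
    have ht : insFace u T ⊤ = v := by
      funext t
      rw [insFace]
      by_cases ht : t ∈ T
      · simp only [ht, dif_pos]
        rw [hTdef, Finset.mem_filter] at ht
        rw [Pi.top_apply]
        exact ht.2.2.symm
      · simp only [ht, dif_neg, not_false_iff]
        rw [hTdef, Finset.mem_filter] at ht
        push_neg at ht
        rcases two_cases (u t) with h1 | h1
        · rcases two_cases (v t) with h2 | h2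
          · rw [h1, h2]
          · exact absurd h2 (ht (Finset.mem_univ t) h1)
        · rw [h1, (le_coords.1 huv t h1)]
    have hcard : T.card = p + 1 := by
      have h5 := normOf_insFace u T
      rw [hb, ht] at h5
      omega
    have hc := (bridgeB u T F).1 (h u T hcard)
    rwa [hb, ht] at hc
  · intro h3 u T hT
    refine (bridgeB u T F).2 ?_
    exact h3 _ _ (insFace_monotone u T bot_le) (by rw [normOf_insFace, hT])

end Assembly

/-- For a cube `F : [1]^r → C` in a category with finite colimits and `p ∈ ℕ`, the following
are equivalent: (1) `F` is left Kan extended from vertices of norm `≤ p`; (2) every face of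
dimension `≥ p+1` containing the initial vertex is cocartesian; (3) every face of dimension
exactly `p+1` is cocartesian. -/
theorem stmt10 {r : ℕ} (hr : 1 ≤ r) [HasFiniteColimits C]
    (F : (Fin r → Two) ⥤ C) (p : ℕ) :
    ((F.IsLeftKanExtension
        (𝟙 (ObjectProperty.ι (fun v : Fin r → Two => normOf v ≤ p) ⋙ F))) ↔
      (∀ T : Finset (Fin r), p + 1 ≤ T.card →
        IsCocartesianCube (faceFunctor F (fun _ => (⊥ : Two)) T))) ∧
    ((∀ T : Finset (Fin r), p + 1 ≤ T.card →
        IsCocartesianCube (faceFunctor F (fun _ => (⊥ : Two)) T)) ↔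
      (∀ (u : Fin r → Two) (T : Finset (Fin r)), T.card = p + 1 →
        IsCocartesianCube (faceFunctor F u T))) := by
  have e1 := bridgeA F p
  have e2 : Cond1 F p ↔ Cond2 F p := ⟨cond1_to_cond2 F p, cond2_to_cond1 F p⟩
  have e3 := facesBot_iff_cond2 F p
  have e4 := cond2_iff_cond3 F p
  have e5 := facesAll_iff_cond3 F p
  exact ⟨e1.trans (e2.trans e3.symm), e3.trans (e4.trans e5.symm)⟩
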